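/- For 0 < α < 1, the Rényi divergence D_α(P1‖P2) is jointly convex in the pair (P1, P2); for α > 1, D_α(P1‖P2) is convex in P2 for each fixed P1. -/

import Mathlib

open scoped Classical BigOperators

noncomputable def shannonEntropy {X : Type*} [Fintype X] (Q : X → ℝ) : ℝ :=
  -∑ x, Q x * Real.log (Q x)

noncomputable def klDiv {X : Type*} [Fintype X] (Q P : X → ℝ) : EReal :=
  if ∀ x, 0 < Q x → 0 < P x then
    ((∑ x, Q x * Real.log (Q x / P x) : ℝ) : EReal)
  else ⊤

noncomputable def renyiEntropy {X : Type*} [Fintype X] (α : ℝ) (P : X → ℝ) : ℝ :=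
  (1 / (1 - α)) * Real.log (∑ x, P x ^ α)

noncomputable def renyiDiv {X : Type*} [Fintype X] (α : ℝ) (P1 P2 : X → ℝ) : EReal :=
  if 1 < α ∧ ¬ (∀ x, 0 < P1 x → 0 < P2 x) then ⊤
  else if ∀ x, ¬ (0 < P1 x ∧ 0 < P2 x) then ⊤
  else ((1 / (α - 1)) *
      Real.log (∑ x, if 0 < P1 x ∧ 0 < P2 x then P1 x ^ α * P2 x ^ (1 - α) else 0) : ℝ)

def IsPMF {X : Type*} [Fintype X] (P : X → ℝ) : Prop :=
  (∀ x, 0 ≤ P x) ∧ ∑ x, P x = 1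

/-- Joint concavity of the weighted geometric mean. -/
lemma geom_mean_concave2 {α t a b c d : ℝ} (hα : 0 < α) (hα1 : α < 1)
    (ht : 0 ≤ t) (ht1 : t ≤ 1) (ha : 0 ≤ a) (hb : 0 ≤ b) (hc : 0 ≤ c) (hd : 0 ≤ d) :
    t * (a ^ α * b ^ (1 - α)) + (1 - t) * (c ^ α * d ^ (1 - α)) ≤
      (t * a + (1 - t) * c) ^ α * (t * b + (1 - t) * d) ^ (1 - α) := by
  set A := t * a + (1 - t) * c with hA_def
  set B := t * b + (1 - t) * d with hB_def
  have ht1' : 0 ≤ 1 - t := by linarith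
  have hA0 : 0 ≤ A := add_nonneg (mul_nonneg ht ha) (mul_nonneg ht1' hc)
  have hB0 : 0 ≤ B := add_nonneg (mul_nonneg ht hb) (mul_nonneg ht1' hd)
  have hRHS : 0 ≤ A ^ α * B ^ (1 - α) :=
    mul_nonneg (Real.rpow_nonneg hA0 _) (Real.rpow_nonneg hB0 _)
  have zero_term : ∀ s u v : ℝ, 0 ≤ s → 0 ≤ u → s * u = 0 →
      s * (u ^ α * v ^ (1 - α)) = 0 := by
    intro s u v hs hu h
    rcases mul_eq_zero.1 h with h | h
    · rw [h, zero_mul]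
    · rw [h, Real.zero_rpow hα.ne', zero_mul, mul_zero]
  rcases eq_or_lt_of_le hA0 with hA | hA
  · -- A = 0
    have h1 : t * a = 0 := by
      have := mul_nonneg ht ha
      have := mul_nonneg ht1' hc
      nlinarith
    have h2 : (1 - t) * c = 0 := by
      have := mul_nonneg ht ha
      have := mul_nonneg ht1' hc
      nlinarith
    rw [zero_term t a b ht ha h1, zero_term (1 - t) c d ht1' hc h2, add_zero]
    exact hRHS
  rcases eq_or_lt_of_le hB0 with hB | hB
  · -- B = 0
    have h1 : t * b = 0 := by
      have := mul_nonneg ht hb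
      have := mul_nonneg ht1' hd
      nlinarith
    have h2 : (1 - t) * d = 0 := by
      have := mul_nonneg ht hb
      have := mul_nonneg ht1' hd
      nlinarith
    have e1 : t * (a ^ α * b ^ (1 - α)) = 0 := by
      rcases mul_eq_zero.1 h1 with h | h
      · rw [h, zero_mul]
      · rw [h, Real.zero_rpow (by linarith : (1:ℝ) - α ≠ 0), mul_zero, mul_zero]
    have e2 : (1 - t) * (c ^ α * d ^ (1 - α)) = 0 := by
      rcases mul_eq_zero.1 h2 with h | h
      · rw [h, zero_mul]
      · rw [h, Real.zero_rpow (by linarith : (1:ℝ) - α ≠ 0), mul_zero, mul_zero]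
    rw [e1, e2, add_zero]
    exact hRHS
  -- main case: A, B > 0
  have key : ∀ u v : ℝ, 0 ≤ u → 0 ≤ v →
      u ^ α * v ^ (1 - α) ≤ A ^ α * B ^ (1 - α) * (α * (u / A) + (1 - α) * (v / B)) := by
    intro u v hu hv
    have h1 : u ^ α * v ^ (1 - α) = A ^ α * B ^ (1 - α) * ((u / A) ^ α * (v / B) ^ (1 - α)) := by
      rw [Real.div_rpow hu hA.le, Real.div_rpow hv hB.le]
      field_simp
    rw [h1]
    refine mul_le_mul_of_nonneg_left ?_ hRHS
    exact Real.geom_mean_le_arith_mean2_weighted hα.le (by linarith) (div_nonneg hu hA.le)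
      (div_nonneg hv hB.le) (by ring)
  calc t * (a ^ α * b ^ (1 - α)) + (1 - t) * (c ^ α * d ^ (1 - α))
      ≤ t * (A ^ α * B ^ (1 - α) * (α * (a / A) + (1 - α) * (b / B))) +
        (1 - t) * (A ^ α * B ^ (1 - α) * (α * (c / A) + (1 - α) * (d / B))) :=
        add_le_add (mul_le_mul_of_nonneg_left (key a b ha hb) ht)
          (mul_le_mul_of_nonneg_left (key c d hc hd) ht1')
    _ = A ^ α * B ^ (1 - α) * (α * (A / A) + (1 - α) * (B / B)) := by
        rw [hA_def, hB_def]; field_simp; ring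
    _ = A ^ α * B ^ (1 - α) := by
        rw [div_self hA.ne', div_self hB.ne']; ring_nf

/-- Log-convexity of negative powers of an affine mixture. -/
lemma rpow_mix_le_geom {β t p q : ℝ} (hβ : β < 0) (ht : 0 < t) (ht1 : t < 1)
    (hp : 0 < p) (hq : 0 < q) :
    (t * p + (1 - t) * q) ^ β ≤ (p ^ β) ^ t * (q ^ β) ^ (1 - t) := by
  have amgm : p ^ t * q ^ (1 - t) ≤ t * p + (1 - t) * q :=
    Real.geom_mean_le_arith_mean2_weighted ht.le (by linarith) hp.le hq.le (by ring)
  have h0 : 0 < p ^ t * q ^ (1 - t) :=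
    mul_pos (Real.rpow_pos_of_pos hp t) (Real.rpow_pos_of_pos hq _)
  calc (t * p + (1 - t) * q) ^ β ≤ (p ^ t * q ^ (1 - t)) ^ β :=
        Real.rpow_le_rpow_of_nonpos h0 amgm hβ.le
    _ = (p ^ β) ^ t * (q ^ β) ^ (1 - t) := by
        rw [Real.mul_rpow (Real.rpow_nonneg hp.le _) (Real.rpow_nonneg hq.le _),
          ← Real.rpow_mul hp.le, ← Real.rpow_mul hq.le,
          ← Real.rpow_mul hp.le, ← Real.rpow_mul hq.le, mul_comm t β, mul_comm (1-t) β]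

lemma renyiDiv_ne_bot {X : Type*} [Fintype X] (α : ℝ) (P1 P2 : X → ℝ) :
    renyiDiv α P1 P2 ≠ ⊥ := by
  unfold renyiDiv; split_ifs
  · simp
  · simp
  · exact EReal.coe_ne_bot _

lemma coe_mul_renyi_ne_bot {X : Type*} [Fintype X] {c : ℝ} (hc : 0 ≤ c) (α : ℝ)
    (P1 P2 : X → ℝ) : (c : EReal) * renyiDiv α P1 P2 ≠ ⊥ := by
  unfold renyiDiv
  rcases hc.lt_or_eq with h | h
  · split_ifs
    · rw [EReal.coe_mul_top_of_pos h]; simp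
    · rw [EReal.coe_mul_top_of_pos h]; simp
    · rw [← EReal.coe_mul]; exact EReal.coe_ne_bot _
  · rw [← h]; simp

lemma renyiDiv_lt_one_eq {X : Type*} [Fintype X] {α : ℝ} (hα1 : α < 1) (P1 P2 : X → ℝ) :
    renyiDiv α P1 P2 = if ∀ x, ¬ (0 < P1 x ∧ 0 < P2 x) then (⊤ : EReal)
      else ((1 / (α - 1)) *
        Real.log (∑ x, if 0 < P1 x ∧ 0 < P2 x then P1 x ^ α * P2 x ^ (1 - α) else 0) : ℝ) := by
  unfold renyiDiv
  rw [if_neg]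
  rintro ⟨h, _⟩
  linarith

lemma sum_if_eq_sum {X : Type*} [Fintype X] {α : ℝ} (hα : 0 < α) (hα1 : α < 1)
    {P1 P2 : X → ℝ} (h1 : ∀ x, 0 ≤ P1 x) (h2 : ∀ x, 0 ≤ P2 x) :
    ∑ x, (if 0 < P1 x ∧ 0 < P2 x then P1 x ^ α * P2 x ^ (1 - α) else 0) =
      ∑ x, P1 x ^ α * P2 x ^ (1 - α) := by
  refine Finset.sum_congr rfl fun x _ => ?_
  split_ifs with h
  · rfl
  · push_neg at h
    rcases (h1 x).lt_or_eq with hp | hp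
    · have : P2 x = 0 := le_antisymm (h hp) (h2 x)
      rw [this, Real.zero_rpow (by linarith : (1:ℝ) - α ≠ 0), mul_zero]
    · rw [← hp, Real.zero_rpow hα.ne', zero_mul]

/-- Hölder-type bound used for log-convexity. -/
lemma sum_le_rpow_mul_rpow {X : Type*} [Fintype X] {t : ℝ} (ht : 0 < t) (ht1 : t < 1)
    {a b m : X → ℝ} (ha : ∀ x, 0 ≤ a x) (hb : ∀ x, 0 ≤ b x)
    (hm : ∀ x, m x ≤ a x ^ t * b x ^ (1 - t)) :
    ∑ x, m x ≤ (∑ x, a x) ^ t * (∑ x, b x) ^ (1 - t) := by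
  have hpq : Real.HolderConjugate t⁻¹ (1 - t)⁻¹ := by
    rw [Real.holderConjugate_iff]
    constructor
    · nlinarith [mul_inv_cancel₀ ht.ne', inv_pos.2 ht]
    · rw [inv_inv, inv_inv]; ring
  have e1 : ∀ x : X, (a x ^ t) ^ (t⁻¹) = a x := fun x => by
    rw [← Real.rpow_mul (ha x), mul_inv_cancel₀ ht.ne', Real.rpow_one]
  have e2 : ∀ x : X, (b x ^ (1 - t)) ^ ((1 - t)⁻¹) = b x := fun x => by
    rw [← Real.rpow_mul (hb x), mul_inv_cancel₀ (by linarith : (1:ℝ) - t ≠ 0), Real.rpow_one]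
  calc ∑ x, m x ≤ ∑ x, (a x ^ t) * (b x ^ (1 - t)) := Finset.sum_le_sum fun x _ => hm x
    _ ≤ (∑ x, (a x ^ t) ^ (t⁻¹)) ^ (1 / t⁻¹) * (∑ x, (b x ^ (1 - t)) ^ ((1 - t)⁻¹)) ^ (1 / (1 - t)⁻¹) :=
        Real.inner_le_Lp_mul_Lq_of_nonneg _ hpq (fun x _ => Real.rpow_nonneg (ha x) _)
          (fun x _ => Real.rpow_nonneg (hb x) _)
    _ = (∑ x, a x) ^ t * (∑ x, b x) ^ (1 - t) := by
        simp_rw [e1, e2, one_div, inv_inv]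
theorem renyi_div_convex {X : Type*} [Fintype X] :
    (∀ α : ℝ, 0 < α → α < 1 →
      ∀ P1 P2 Q1 Q2 : X → ℝ, IsPMF P1 → IsPMF P2 → IsPMF Q1 → IsPMF Q2 →
      ∀ t : ℝ, 0 ≤ t → t ≤ 1 →
        renyiDiv α (fun x => t * P1 x + (1 - t) * Q1 x) (fun x => t * P2 x + (1 - t) * Q2 x) ≤
          ((t : ℝ) : EReal) * renyiDiv α P1 P2 + ((1 - t : ℝ) : EReal) * renyiDiv α Q1 Q2) ∧
    (∀ α : ℝ, 1 < α →
      ∀ P1 P2 Q2 : X → ℝ, IsPMF P1 → IsPMF P2 → IsPMF Q2 →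
      ∀ t : ℝ, 0 ≤ t → t ≤ 1 →
        renyiDiv α P1 (fun x => t * P2 x + (1 - t) * Q2 x) ≤
          ((t : ℝ) : EReal) * renyiDiv α P1 P2 + ((1 - t : ℝ) : EReal) * renyiDiv α P1 Q2) := by
  constructor
  · intro α hα0 hα1 P1 P2 Q1 Q2 hP1 hP2 hQ1 hQ2 t ht0 ht1
    rcases eq_or_lt_of_le ht0 with h0 | ht0'
    · subst h0
      have e1 : (fun x => 0 * P1 x + (1 - 0) * Q1 x) = Q1 := by funext x; ring
      have e2 : (fun x => 0 * P2 x + (1 - 0) * Q2 x) = Q2 := by funext x; ring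
      rw [e1, e2]
      norm_num
    rcases eq_or_lt_of_le ht1 with h1 | ht1'
    · subst h1
      have e1 : (fun x => 1 * P1 x + (1 - 1) * Q1 x) = P1 := by funext x; ring
      have e2 : (fun x => 1 * P2 x + (1 - 1) * Q2 x) = P2 := by funext x; ring
      rw [e1, e2]
      norm_num
    by_cases hP : ∀ x, ¬ (0 < P1 x ∧ 0 < P2 x)
    · have h1 : ((t : ℝ) : EReal) * renyiDiv α P1 P2 = ⊤ := by
        rw [renyiDiv_lt_one_eq hα1, if_pos hP, EReal.coe_mul_top_of_pos ht0']
      rw [h1, EReal.top_add_of_ne_bot (coe_mul_renyi_ne_bot (by linarith) α Q1 Q2)]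
      exact le_top
    by_cases hQ : ∀ x, ¬ (0 < Q1 x ∧ 0 < Q2 x)
    · have h1 : ((1 - t : ℝ) : EReal) * renyiDiv α Q1 Q2 = ⊤ := by
        rw [renyiDiv_lt_one_eq hα1, if_pos hQ, EReal.coe_mul_top_of_pos (by linarith)]
      rw [h1, EReal.add_top_of_ne_bot (coe_mul_renyi_ne_bot ht0'.le α P1 P2)]
      exact le_top
    push_neg at hP hQ
    obtain ⟨xP, hxP1, hxP2⟩ := hP
    obtain ⟨xQ, hxQ1, hxQ2⟩ := hQ
    have hM : ¬ ∀ x, ¬ (0 < t * P1 x + (1 - t) * Q1 x ∧ 0 < t * P2 x + (1 - t) * Q2 x) := by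
      push_neg
      exact ⟨xP,
        add_pos_of_pos_of_nonneg (mul_pos ht0' hxP1) (mul_nonneg (by linarith) (hQ1.1 xP)),
        add_pos_of_pos_of_nonneg (mul_pos ht0' hxP2) (mul_nonneg (by linarith) (hQ2.1 xP))⟩
    rw [renyiDiv_lt_one_eq hα1 P1 P2, renyiDiv_lt_one_eq hα1 Q1 Q2,
      renyiDiv_lt_one_eq hα1 (fun x => t * P1 x + (1 - t) * Q1 x)
        (fun x => t * P2 x + (1 - t) * Q2 x),
      if_neg hM, if_neg (by push_neg; exact ⟨xP, hxP1, hxP2⟩),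
      if_neg (by push_neg; exact ⟨xQ, hxQ1, hxQ2⟩)]
    rw [← EReal.coe_mul, ← EReal.coe_mul, ← EReal.coe_add, EReal.coe_le_coe_iff]
    rw [sum_if_eq_sum hα0 hα1 hP1.1 hP2.1, sum_if_eq_sum hα0 hα1 hQ1.1 hQ2.1,
      sum_if_eq_sum hα0 hα1
        (fun x => add_nonneg (mul_nonneg ht0'.le (hP1.1 x)) (mul_nonneg (by linarith) (hQ1.1 x)))
        (fun x => add_nonneg (mul_nonneg ht0'.le (hP2.1 x)) (mul_nonneg (by linarith) (hQ2.1 x)))]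
    set SP := ∑ x, P1 x ^ α * P2 x ^ (1 - α) with hSP
    set SQ := ∑ x, Q1 x ^ α * Q2 x ^ (1 - α) with hSQ
    set SM := ∑ x, (t * P1 x + (1 - t) * Q1 x) ^ α * (t * P2 x + (1 - t) * Q2 x) ^ (1 - α)
      with hSM
    have SP_pos : 0 < SP :=
      Finset.sum_pos'
        (fun x _ => mul_nonneg (Real.rpow_nonneg (hP1.1 x) _) (Real.rpow_nonneg (hP2.1 x) _))
        ⟨xP, Finset.mem_univ xP,
          mul_pos (Real.rpow_pos_of_pos hxP1 _) (Real.rpow_pos_of_pos hxP2 _)⟩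
    have SQ_pos : 0 < SQ :=
      Finset.sum_pos'
        (fun x _ => mul_nonneg (Real.rpow_nonneg (hQ1.1 x) _) (Real.rpow_nonneg (hQ2.1 x) _))
        ⟨xQ, Finset.mem_univ xQ,
          mul_pos (Real.rpow_pos_of_pos hxQ1 _) (Real.rpow_pos_of_pos hxQ2 _)⟩
    have hconc : t * SP + (1 - t) * SQ ≤ SM := by
      rw [hSP, hSQ, hSM, Finset.mul_sum, Finset.mul_sum, ← Finset.sum_add_distrib]
      exact Finset.sum_le_sum fun x _ =>
        geom_mean_concave2 hα0 hα1 ht0'.le ht1'.le (hP1.1 x) (hP2.1 x) (hQ1.1 x) (hQ2.1 x)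
    have hgm : SP ^ t * SQ ^ (1 - t) ≤ t * SP + (1 - t) * SQ :=
      Real.geom_mean_le_arith_mean2_weighted ht0'.le (by linarith) SP_pos.le SQ_pos.le (by ring)
    have hlog : t * Real.log SP + (1 - t) * Real.log SQ ≤ Real.log SM := by
      have e : Real.log (SP ^ t * SQ ^ (1 - t)) =
          t * Real.log SP + (1 - t) * Real.log SQ := by
        rw [Real.log_mul (Real.rpow_pos_of_pos SP_pos t).ne' (Real.rpow_pos_of_pos SQ_pos _).ne',
          Real.log_rpow SP_pos, Real.log_rpow SQ_pos]
      rw [← e]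
      exact Real.log_le_log
        (mul_pos (Real.rpow_pos_of_pos SP_pos _) (Real.rpow_pos_of_pos SQ_pos _))
        (hgm.trans hconc)
    have hc : 1 / (α - 1) < 0 := div_neg_of_pos_of_neg one_pos (by linarith)
    calc (1 / (α - 1)) * Real.log SM
        ≤ (1 / (α - 1)) * (t * Real.log SP + (1 - t) * Real.log SQ) :=
          mul_le_mul_of_nonpos_left hlog hc.le
      _ = t * (1 / (α - 1) * Real.log SP) + (1 - t) * (1 / (α - 1) * Real.log SQ) := by ring
  · intro α hα P1 P2 Q2 hP1 hP2 hQ2 t ht0 ht1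
    rcases eq_or_lt_of_le ht0 with h0 | ht0'
    · subst h0
      have e2 : (fun x => 0 * P2 x + (1 - 0) * Q2 x) = Q2 := by funext x; ring
      rw [e2]
      norm_num
    rcases eq_or_lt_of_le ht1 with h1 | ht1'
    · subst h1
      have e2 : (fun x => 1 * P2 x + (1 - 1) * Q2 x) = P2 := by funext x; ring
      rw [e2]
      norm_num
    by_cases hP : ∀ x, 0 < P1 x → 0 < P2 x
    swap
    · have h1 : ((t : ℝ) : EReal) * renyiDiv α P1 P2 = ⊤ := by
        unfold renyiDiv
        rw [if_pos ⟨hα, hP⟩, EReal.coe_mul_top_of_pos ht0']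
      rw [h1, EReal.top_add_of_ne_bot (coe_mul_renyi_ne_bot (by linarith) α P1 Q2)]
      exact le_top
    by_cases hQ : ∀ x, 0 < P1 x → 0 < Q2 x
    swap
    · have h1 : ((1 - t : ℝ) : EReal) * renyiDiv α P1 Q2 = ⊤ := by
        unfold renyiDiv
        rw [if_pos ⟨hα, hQ⟩, EReal.coe_mul_top_of_pos (by linarith)]
      rw [h1, EReal.add_top_of_ne_bot (coe_mul_renyi_ne_bot ht0'.le α P1 P2)]
      exact le_top
    obtain ⟨x0, hx0⟩ : ∃ x, 0 < P1 x := by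
      by_contra h
      push_neg at h
      have hz : ∑ x, P1 x = 0 := Finset.sum_eq_zero fun x _ => le_antisymm (h x) (hP1.1 x)
      rw [hP1.2] at hz
      norm_num at hz
    have hMsup : ∀ x, 0 < P1 x → 0 < t * P2 x + (1 - t) * Q2 x := fun x hx =>
      add_pos (mul_pos ht0' (hP x hx)) (mul_pos (by linarith) (hQ x hx))
    have eP : renyiDiv α P1 P2 = (((1 / (α - 1)) *
        Real.log (∑ x, if 0 < P1 x ∧ 0 < P2 x then P1 x ^ α * P2 x ^ (1 - α) else 0) : ℝ) :
          EReal) := by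
      unfold renyiDiv
      rw [if_neg (by rintro ⟨-, h⟩; exact h hP),
        if_neg (by push_neg; exact ⟨x0, hx0, hP x0 hx0⟩)]
    have eQ : renyiDiv α P1 Q2 = (((1 / (α - 1)) *
        Real.log (∑ x, if 0 < P1 x ∧ 0 < Q2 x then P1 x ^ α * Q2 x ^ (1 - α) else 0) : ℝ) :
          EReal) := by
      unfold renyiDiv
      rw [if_neg (by rintro ⟨-, h⟩; exact h hQ),
        if_neg (by push_neg; exact ⟨x0, hx0, hQ x0 hx0⟩)]
    have eM : renyiDiv α P1 (fun x => t * P2 x + (1 - t) * Q2 x) = (((1 / (α - 1)) *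
        Real.log (∑ x, if 0 < P1 x ∧ 0 < t * P2 x + (1 - t) * Q2 x then
          P1 x ^ α * (t * P2 x + (1 - t) * Q2 x) ^ (1 - α) else 0) : ℝ) : EReal) := by
      unfold renyiDiv
      rw [if_neg (by rintro ⟨-, h⟩; exact h hMsup),
        if_neg (by push_neg; exact ⟨x0, hx0, hMsup x0 hx0⟩)]
    rw [eP, eQ, eM, ← EReal.coe_mul, ← EReal.coe_mul, ← EReal.coe_add, EReal.coe_le_coe_iff]
    have rP : (∑ x, if 0 < P1 x ∧ 0 < P2 x then P1 x ^ α * P2 x ^ (1 - α) else 0) =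
        ∑ x, (if 0 < P1 x then P1 x ^ α * P2 x ^ (1 - α) else 0) :=
      Finset.sum_congr rfl fun x _ => by
        by_cases h : 0 < P1 x
        · rw [if_pos ⟨h, hP x h⟩, if_pos h]
        · rw [if_neg fun hh => h hh.1, if_neg h]
    have rQ : (∑ x, if 0 < P1 x ∧ 0 < Q2 x then P1 x ^ α * Q2 x ^ (1 - α) else 0) =
        ∑ x, (if 0 < P1 x then P1 x ^ α * Q2 x ^ (1 - α) else 0) :=
      Finset.sum_congr rfl fun x _ => by
        by_cases h : 0 < P1 x
        · rw [if_pos ⟨h, hQ x h⟩, if_pos h]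
        · rw [if_neg fun hh => h hh.1, if_neg h]
    have rM : (∑ x, if 0 < P1 x ∧ 0 < t * P2 x + (1 - t) * Q2 x then
          P1 x ^ α * (t * P2 x + (1 - t) * Q2 x) ^ (1 - α) else 0) =
        ∑ x, (if 0 < P1 x then P1 x ^ α * (t * P2 x + (1 - t) * Q2 x) ^ (1 - α) else 0) :=
      Finset.sum_congr rfl fun x _ => by
        by_cases h : 0 < P1 x
        · rw [if_pos ⟨h, hMsup x h⟩, if_pos h]
        · rw [if_neg fun hh => h hh.1, if_neg h]
    rw [rP, rQ, rM]
    set a : X → ℝ := fun x => if 0 < P1 x then P1 x ^ α * P2 x ^ (1 - α) else 0 with ha_def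
    set b : X → ℝ := fun x => if 0 < P1 x then P1 x ^ α * Q2 x ^ (1 - α) else 0 with hb_def
    set m : X → ℝ :=
      fun x => if 0 < P1 x then P1 x ^ α * (t * P2 x + (1 - t) * Q2 x) ^ (1 - α) else 0
      with hm_def
    have ha : ∀ x, 0 ≤ a x := fun x => by
      rw [ha_def]
      dsimp only
      split_ifs with h
      · exact mul_nonneg (Real.rpow_nonneg h.le _) (Real.rpow_nonneg (hP2.1 x) _)
      · exact le_refl 0
    have hb : ∀ x, 0 ≤ b x := fun x => by
      rw [hb_def]
      dsimp only
      split_ifs with h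
      · exact mul_nonneg (Real.rpow_nonneg h.le _) (Real.rpow_nonneg (hQ2.1 x) _)
      · exact le_refl 0
    have hm : ∀ x, m x ≤ a x ^ t * b x ^ (1 - t) := by
      intro x
      rw [ha_def, hb_def, hm_def]
      dsimp only
      by_cases h : 0 < P1 x
      · rw [if_pos h, if_pos h, if_pos h]
        have key := rpow_mix_le_geom (β := 1 - α) (by linarith) ht0' ht1' (hP x h) (hQ x h)
        calc P1 x ^ α * (t * P2 x + (1 - t) * Q2 x) ^ (1 - α)
            ≤ P1 x ^ α * ((P2 x ^ (1 - α)) ^ t * (Q2 x ^ (1 - α)) ^ (1 - t)) :=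
              mul_le_mul_of_nonneg_left key (Real.rpow_nonneg h.le _)
          _ = (P1 x ^ α * P2 x ^ (1 - α)) ^ t * (P1 x ^ α * Q2 x ^ (1 - α)) ^ (1 - t) := by
              rw [Real.mul_rpow (Real.rpow_nonneg h.le _) (Real.rpow_nonneg (hP2.1 x) _),
                Real.mul_rpow (Real.rpow_nonneg h.le _) (Real.rpow_nonneg (hQ2.1 x) _)]
              have e : (P1 x ^ α) ^ t * (P1 x ^ α) ^ (1 - t) = P1 x ^ α := by
                rw [← Real.rpow_add (Real.rpow_pos_of_pos h α)]
                norm_num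
              conv_lhs => rw [← e]
              ring
      · rw [if_neg h, if_neg h, if_neg h, Real.zero_rpow ht0'.ne',
          Real.zero_rpow (by linarith : (1:ℝ) - t ≠ 0), mul_zero]
    have holder := sum_le_rpow_mul_rpow ht0' ht1' ha hb hm
    have SP_pos : 0 < ∑ x, a x :=
      Finset.sum_pos' (fun x _ => ha x)
        ⟨x0, Finset.mem_univ x0, by
          rw [ha_def]
          dsimp only
          rw [if_pos hx0]
          exact mul_pos (Real.rpow_pos_of_pos hx0 _) (Real.rpow_pos_of_pos (hP x0 hx0) _)⟩
    have SQ_pos : 0 < ∑ x, b x :=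
      Finset.sum_pos' (fun x _ => hb x)
        ⟨x0, Finset.mem_univ x0, by
          rw [hb_def]
          dsimp only
          rw [if_pos hx0]
          exact mul_pos (Real.rpow_pos_of_pos hx0 _) (Real.rpow_pos_of_pos (hQ x0 hx0) _)⟩
    have SM_pos : 0 < ∑ x, m x :=
      Finset.sum_pos' (fun x _ => by
          rw [hm_def]
          dsimp only
          split_ifs with h
          · exact mul_nonneg (Real.rpow_nonneg h.le _) (Real.rpow_nonneg
              (add_nonneg (mul_nonneg ht0'.le (hP2.1 x))
                (mul_nonneg (by linarith) (hQ2.1 x))) _)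
          · exact le_refl 0)
        ⟨x0, Finset.mem_univ x0, by
          rw [hm_def]
          dsimp only
          rw [if_pos hx0]
          exact mul_pos (Real.rpow_pos_of_pos hx0 _)
            (Real.rpow_pos_of_pos (hMsup x0 hx0) _)⟩
    have hlog : Real.log (∑ x, m x) ≤
        t * Real.log (∑ x, a x) + (1 - t) * Real.log (∑ x, b x) := by
      have h2 := Real.log_le_log SM_pos holder
      rwa [Real.log_mul (Real.rpow_pos_of_pos SP_pos _).ne' (Real.rpow_pos_of_pos SQ_pos _).ne',
        Real.log_rpow SP_pos, Real.log_rpow SQ_pos] at h2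
    have hc : 0 < 1 / (α - 1) := one_div_pos.2 (by linarith)
    calc (1 / (α - 1)) * Real.log (∑ x, m x)
        ≤ (1 / (α - 1)) * (t * Real.log (∑ x, a x) + (1 - t) * Real.log (∑ x, b x)) :=
          mul_le_mul_of_nonneg_left hlog hc.le
      _ = t * (1 / (α - 1) * Real.log (∑ x, a x)) +
          (1 - t) * (1 / (α - 1) * Real.log (∑ x, b x)) := by ring
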